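/- Let k ∈ {−1,0,1}, ε, n ∈ {0,1} with εn = εk = 0, and let a, b : ℝ → (0,∞) be differentiable. Let (t,r) be a point with Σ(r,k) > 0 and Σ_{,r}(r,k) ≠ 0, and suppose the three exterior conditions hold at (t,r): (I) D̂_t Ĉ_r − D̂_r Ĉ_t = 0, (II) Ê_t D̂_r − Ê_r D̂_t = 0, (III) Ê_t Ĉ_r − Ê_r Ĉ_t = 0. Then a'(t) = 0, and moreover either n = 0 or b'(t) = 0. (In particular, if n = 1 then both a'(t) = 0 and b'(t) = 0, so the LRS metric is static at t.) -/

import Mathlib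

/-- `Σ(y,k)`: `sin y` for `k = 1`, `y` for `k = 0`, `sinh y` for `k = −1`. -/
noncomputable def Sig (k y : ℝ) : ℝ :=
  if k = 1 then Real.sin y else if k = 0 then y else Real.sinh y

/-- `Σ_{,y}(y,k)`: `cos y` for `k = 1`, `1` for `k = 0`, `cosh y` for `k = −1`. -/
noncomputable def Sigr (k y : ℝ) : ℝ :=
  if k = 1 then Real.cos y else if k = 0 then 1 else Real.cosh y

/-- `F(y,k)`: `−cos y` for `k = 1`, `y²/2` for `k = 0`, `cosh y` for `k = −1`. -/
noncomputable def Ffun (k y : ℝ) : ℝ :=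
  if k = 1 then -Real.cos y else if k = 0 then y ^ 2 / 2 else Real.cosh y

/-- LRS metric coefficient `Ĉ(t,r) = (b(t)²Σ(r,k)² + n a(t)²(F(r,k)+k)²)^{1/2}`. -/
noncomputable def Chat (k n : ℝ) (a b : ℝ → ℝ) (t r : ℝ) : ℝ :=
  Real.sqrt ((b t) ^ 2 * (Sig k r) ^ 2 + n * (a t) ^ 2 * (Ffun k r + k) ^ 2)

/-- LRS metric coefficient `D̂(t,r) = (a(t)² + ε r² b(t)²)^{1/2}`. -/
noncomputable def Dhat (ε : ℝ) (a b : ℝ → ℝ) (t r : ℝ) : ℝ :=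
  Real.sqrt ((a t) ^ 2 + ε * r ^ 2 * (b t) ^ 2)

/-- LRS metric coefficient `Ê(t,r) = n a(t)²(F(r,k)+k)`. -/
noncomputable def Ehat (k n : ℝ) (a : ℝ → ℝ) (t r : ℝ) : ℝ :=
  n * (a t) ^ 2 * (Ffun k r + k)

lemma hasDerivAt_Sig (k : ℝ) (hk : k = -1 ∨ k = 0 ∨ k = 1) (y : ℝ) :
    HasDerivAt (fun s => Sig k s) (Sigr k y) y := by
  rcases hk with h | h | h <;> subst h <;> simp only [Sig, Sigr] <;> norm_num
  · exact Real.hasDerivAt_sinh y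
  · exact hasDerivAt_id y
  · exact Real.hasDerivAt_sin y

lemma hasDerivAt_Ffun (k : ℝ) (hk : k = -1 ∨ k = 0 ∨ k = 1) (y : ℝ) :
    HasDerivAt (fun s => Ffun k s) (Sig k y) y := by
  rcases hk with h | h | h <;> subst h <;> simp only [Ffun, Sig] <;> norm_num
  · exact Real.hasDerivAt_cosh y
  · simpa using (hasDerivAt_pow 2 y).div_const 2
  · have h := (Real.hasDerivAt_cos y).neg
    rw [neg_neg] at h
    exact h

/-- if at a point `(t,r)` with `Σ(r,k) > 0` and `Σ_{,r}(r,k) ≠ 0` the three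
exterior conditions (I) `D̂_t Ĉ_r − D̂_r Ĉ_t = 0`, (II) `Ê_t D̂_r − Ê_r D̂_t = 0`,
(III) `Ê_t Ĉ_r − Ê_r Ĉ_t = 0` hold, then `a'(t) = 0` and moreover `n = 0` or `b'(t) = 0`
(so for `n = 1` the LRS metric is static at `t`). -/
theorem exterior_conditions_force_staticity (k ε n : ℝ)
    (hk : k = -1 ∨ k = 0 ∨ k = 1) (hε : ε = 0 ∨ ε = 1) (hn : n = 0 ∨ n = 1)
    (hεn : ε * n = 0) (hεk : ε * k = 0)
    (a b : ℝ → ℝ) (ha : Differentiable ℝ a) (hb : Differentiable ℝ b)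
    (hapos : ∀ s, 0 < a s) (hbpos : ∀ s, 0 < b s)
    (t r : ℝ) (hSig : 0 < Sig k r) (hSigr : Sigr k r ≠ 0)
    (hI : deriv (fun s => Dhat ε a b s r) t * deriv (fun s => Chat k n a b t s) r -
        deriv (fun s => Dhat ε a b t s) r * deriv (fun s => Chat k n a b s r) t = 0)
    (hII : deriv (fun s => Ehat k n a s r) t * deriv (fun s => Dhat ε a b t s) r -
        deriv (fun s => Ehat k n a t s) r * deriv (fun s => Dhat ε a b s r) t = 0)
    (hIII : deriv (fun s => Ehat k n a s r) t * deriv (fun s => Chat k n a b t s) r -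
        deriv (fun s => Ehat k n a t s) r * deriv (fun s => Chat k n a b s r) t = 0) :
    deriv a t = 0 ∧ (n = 0 ∨ deriv b t = 0) := by
  have hA : HasDerivAt a (deriv a t) t := (ha t).hasDerivAt
  have hB : HasDerivAt b (deriv b t) t := (hb t).hasDerivAt
  have hn0 : (0:ℝ) ≤ n := by rcases hn with h | h <;> simp [h]
  have hε0 : (0:ℝ) ≤ ε := by rcases hε with h | h <;> simp [h]
  have hDin : 0 < (a t) ^ 2 + ε * r ^ 2 * (b t) ^ 2 := by
    have h1 : 0 < (a t) ^ 2 := pow_pos (hapos t) 2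
    nlinarith [mul_nonneg (mul_nonneg hε0 (sq_nonneg r)) (sq_nonneg (b t))]
  have hCin : 0 < (b t) ^ 2 * (Sig k r) ^ 2 + n * (a t) ^ 2 * (Ffun k r + k) ^ 2 := by
    have h1 : 0 < (b t) ^ 2 * (Sig k r) ^ 2 :=
      mul_pos (pow_pos (hbpos t) 2) (pow_pos hSig 2)
    nlinarith [mul_nonneg (mul_nonneg hn0 (sq_nonneg (a t))) (sq_nonneg (Ffun k r + k))]
  have hSd := hasDerivAt_Sig k hk r
  have hFd := hasDerivAt_Ffun k hk r
  -- six derivatives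
  have hEt : HasDerivAt (fun s => Ehat k n a s r)
      (n * (2 * a t ^ 1 * deriv a t) * (Ffun k r + k)) t :=
    ((hA.pow 2).const_mul n).mul_const _
  have hEr : HasDerivAt (fun s => Ehat k n a t s)
      (n * a t ^ 2 * Sig k r) r :=
    (hFd.add_const k).const_mul _
  have hDt : HasDerivAt (fun s => Dhat ε a b s r)
      ((2 * a t ^ 1 * deriv a t + ε * r ^ 2 * (2 * b t ^ 1 * deriv b t)) /
        (2 * Real.sqrt ((a t) ^ 2 + ε * r ^ 2 * (b t) ^ 2))) t :=
    ((hA.pow 2).add (((hB.pow 2).const_mul (ε * r ^ 2)))).sqrt (ne_of_gt hDin)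
  have hDr : HasDerivAt (fun s => Dhat ε a b t s)
      ((ε * (2 * r ^ 1) * (b t) ^ 2) /
        (2 * Real.sqrt ((a t) ^ 2 + ε * r ^ 2 * (b t) ^ 2))) r := by
    have h1 : HasDerivAt (fun s : ℝ => (a t) ^ 2 + ε * s ^ 2 * (b t) ^ 2)
        (ε * (2 * r ^ 1) * (b t) ^ 2) r := by
      have := (((hasDerivAt_pow 2 r).const_mul ε).mul_const ((b t) ^ 2)).const_add ((a t) ^ 2)
      simpa using this
    exact h1.sqrt (ne_of_gt hDin)
  have hCt : HasDerivAt (fun s => Chat k n a b s r)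
      ((2 * b t ^ 1 * deriv b t * (Sig k r) ^ 2 +
        n * (2 * a t ^ 1 * deriv a t) * (Ffun k r + k) ^ 2) /
        (2 * Real.sqrt ((b t) ^ 2 * (Sig k r) ^ 2 + n * (a t) ^ 2 * (Ffun k r + k) ^ 2))) t :=
    (((hB.pow 2).mul_const _).add (((hA.pow 2).const_mul n).mul_const _)).sqrt (ne_of_gt hCin)
  have hCr : HasDerivAt (fun s => Chat k n a b t s)
      (((b t) ^ 2 * (2 * Sig k r ^ 1 * Sigr k r) +
        n * (a t) ^ 2 * (2 * (Ffun k r + k) ^ 1 * Sig k r)) /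
        (2 * Real.sqrt ((b t) ^ 2 * (Sig k r) ^ 2 + n * (a t) ^ 2 * (Ffun k r + k) ^ 2))) r :=
    (((hSd.pow 2).const_mul _).add (((hFd.add_const k).pow 2).const_mul _)).sqrt (ne_of_gt hCin)
  rw [hDt.deriv, hDr.deriv, hCt.deriv, hCr.deriv] at hI
  rw [hEt.deriv, hEr.deriv, hDt.deriv, hDr.deriv] at hII
  rw [hEt.deriv, hEr.deriv, hCt.deriv, hCr.deriv] at hIII
  set c := Real.sqrt ((b t) ^ 2 * (Sig k r) ^ 2 + n * (a t) ^ 2 * (Ffun k r + k) ^ 2) with hc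
  set d := Real.sqrt ((a t) ^ 2 + ε * r ^ 2 * (b t) ^ 2) with hd
  have hcpos : 0 < c := Real.sqrt_pos.mpr hCin
  have hdpos : 0 < d := Real.sqrt_pos.mpr hDin
  have hcne : c ≠ 0 := ne_of_gt hcpos
  have hdne : d ≠ 0 := ne_of_gt hdpos
  rcases hn with hn' | hn'
  · subst hn'
    refine ⟨?_, Or.inl rfl⟩
    rcases hε with hε' | hε'
    · subst hε'
      field_simp at hI
      have key : deriv a t * (a t * (b t ^ 2 * (Sig k r * Sigr k r))) = 0 := by
        linear_combination hI
      have hne : a t * (b t ^ 2 * (Sig k r * Sigr k r)) ≠ 0 :=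
        mul_ne_zero (ne_of_gt (hapos t)) (mul_ne_zero (ne_of_gt (pow_pos (hbpos t) 2))
          (mul_ne_zero (ne_of_gt hSig) hSigr))
      exact (mul_eq_zero.mp key).resolve_right hne
    · subst hε'
      have hk0 : k = 0 := by linarith [hεk]
      subst hk0
      have hS : Sig 0 r = r := by simp [Sig]
      have hS' : Sigr 0 r = 1 := by simp [Sigr]
      simp only [hS, hS'] at hI hSig
      field_simp at hI
      have key : deriv a t * (a t * (b t ^ 2 * r)) = 0 := by
        linear_combination hI
      have hne : a t * (b t ^ 2 * r) ≠ 0 :=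
        mul_ne_zero (ne_of_gt (hapos t)) (mul_ne_zero (ne_of_gt (pow_pos (hbpos t) 2))
          (ne_of_gt hSig))
      exact (mul_eq_zero.mp key).resolve_right hne
  · subst hn'
    have hε' : ε = 0 := by linarith [hεn]
    subst hε'
    field_simp at hII
    have keyA : deriv a t * (a t ^ 3 * Sig k r) = 0 := by
      linear_combination -hII
    have hneA : a t ^ 3 * Sig k r ≠ 0 :=
      mul_ne_zero (ne_of_gt (pow_pos (hapos t) 3)) (ne_of_gt hSig)
    have hA0 : deriv a t = 0 := (mul_eq_zero.mp keyA).resolve_right hneA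
    refine ⟨hA0, Or.inr ?_⟩
    rw [hA0] at hIII
    field_simp at hIII
    have keyB : deriv b t * (a t ^ 2 * (b t * Sig k r ^ 3)) = 0 := by
      linear_combination -hIII
    have hneB : a t ^ 2 * (b t * Sig k r ^ 3) ≠ 0 :=
      mul_ne_zero (ne_of_gt (pow_pos (hapos t) 2))
        (mul_ne_zero (ne_of_gt (hbpos t)) (ne_of_gt (pow_pos hSig 3)))
    exact (mul_eq_zero.mp keyB).resolve_right hneB
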